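/- The map sending a word w over the alphabet {1,...,r} to the flow f_w on the complete digraph K_r, where f_w(i,j) counts positions at which the nondecreasing rearrangement of w has letter i and w has letter j, is a surjection onto the set of flows; moreover for each flow γ the fiber over γ has exactly mult(γ) elements. -/

import Mathlib

/-- `fw w (i,j)` counts the positions at which the nondecreasing rearrangement of `w`
has letter `i` while `w` itself has letter `j`. -/
def fw {r : ℕ} (w : List (Fin r)) (e : Fin r × Fin r) : ℕ :=
  ((w.insertionSort (· ≤ ·)).zip w).count e

/-- A flow on the complete digraph `K_r`: at every vertex the outgoing values sum to
the incoming values. -/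
def IsFlowKr {r : ℕ} (γ : Fin r × Fin r → ℕ) : Prop :=
  ∀ i : Fin r, ∑ j : Fin r, γ (i, j) = ∑ j : Fin r, γ (j, i)

open List



variable {α β : Type*}

lemma zipAppend : ∀ (l₁ l₂ : List α) (w : List β),
    (l₁ ++ l₂).zip w = l₁.zip w ++ l₂.zip (w.drop l₁.length)
  | [], l₂, w => by simp
  | a :: l₁, l₂, [] => by simp
  | a :: l₁, l₂, b :: w => by
      simp [List.zip_cons_cons, zipAppend l₁ l₂ w]

lemma zipReplicate : ∀ (n : ℕ) (i : α) (w : List β),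
    (List.replicate n i).zip w = (w.take n).map (Prod.mk i)
  | 0, i, w => by simp
  | n + 1, i, [] => by simp
  | n + 1, i, b :: w => by
      simp [List.replicate_succ, List.zip_cons_cons, zipReplicate n i w]

lemma count_map_mk [DecidableEq α] [DecidableEq β] (i a : α) (b : β) (u : List β) :
    (u.map (Prod.mk i)).count (a, b) = if i = a then u.count b else 0 := by
  induction u with
  | nil => simp
  | cons x t ih =>
      simp only [List.map_cons, List.count_cons, ih]
      by_cases h : i = a
      · subst h
        by_cases hb : x = b <;> simp [hb, Prod.ext_iff]
      · simp [h, Prod.ext_iff]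

section Main
variable {r : ℕ} (c : Fin r → ℕ)

lemma count_zip_flatMap_notmem (j : Fin r) :
    ∀ (L : List (Fin r)) (w : List (Fin r)) (i : Fin r), i ∉ L →
      ((L.flatMap (fun k => List.replicate (c k) k)).zip w).count (i, j) = 0
  | [], w, i, _ => by simp
  | k :: L, w, i, hi => by
      rw [List.flatMap_cons, zipAppend, List.count_append, zipReplicate,
        count_map_mk, List.length_replicate]
      have hki : ¬ (k = i) := fun h => hi (h ▸ (List.mem_cons_self (a := k) (l := L)))
      rw [if_neg hki,
        count_zip_flatMap_notmem j L _ i (fun h => hi (List.mem_cons_of_mem _ h))]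

lemma count_zip_flatMap (b : Fin r → List (Fin r)) (j : Fin r) :
    ∀ (L : List (Fin r)), L.Nodup → (∀ k ∈ L, (b k).length = c k) →
      ∀ i ∈ L,
      ((L.flatMap (fun k => List.replicate (c k) k)).zip (L.flatMap b)).count (i, j)
        = (b i).count j
  | [], _, _, i, hi => by simp at hi
  | k :: L, hnd, hlen, i, hi => by
      rw [List.flatMap_cons, List.flatMap_cons, zipAppend, zipReplicate,
        List.count_append, List.length_replicate]
      have hbk : (b k).length = c k := hlen k ((List.mem_cons_self (a := k) (l := L)))
      have htake : (b k ++ L.flatMap b).take (c k) = b k := by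
        rw [← hbk, List.take_left]
      have hdrop : (b k ++ L.flatMap b).drop (c k) = L.flatMap b := by
        rw [← hbk, List.drop_left]
      rw [htake, hdrop, count_map_mk]
      rcases List.mem_cons.mp hi with rfl | hiL
      · rw [if_pos rfl,
          count_zip_flatMap_notmem c j L _ i (List.nodup_cons.mp hnd).1, add_zero]
      · have hki : ¬ (k = i) := fun h => (List.nodup_cons.mp hnd).1 (h ▸ hiL)
        rw [if_neg hki, zero_add]
        exact count_zip_flatMap b j L (List.nodup_cons.mp hnd).2
          (fun x hx => hlen x (List.mem_cons_of_mem _ hx)) i hiL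

lemma exists_blocks :
    ∀ (L : List (Fin r)), L.Nodup → ∀ (w : List (Fin r)),
      w.length = (L.map c).sum →
      ∃ b : Fin r → List (Fin r), L.flatMap b = w ∧ ∀ k ∈ L, (b k).length = c k
  | [], _, w, hw => by
      refine ⟨fun _ => [], ?_, by simp⟩
      simp only [List.map_nil, List.sum_nil] at hw
      simp [List.length_eq_zero_iff.mp hw]
  | k :: L, hnd, w, hw => by
      simp only [List.map_cons, List.sum_cons] at hw
      have hck : c k ≤ w.length := by omega
      obtain ⟨b', hb'1, hb'2⟩ := exists_blocks L (List.nodup_cons.mp hnd).2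
        (w.drop (c k)) (by rw [List.length_drop]; omega)
      refine ⟨Function.update b' k (w.take (c k)), ?_, ?_⟩
      · rw [List.flatMap_cons, Function.update_self]
        have : L.flatMap (Function.update b' k (w.take (c k))) = L.flatMap b' := by
          unfold List.flatMap
          congr 1
          exact List.map_congr_left fun x hx =>
            Function.update_of_ne (fun h : x = k => (List.nodup_cons.mp hnd).1 (h ▸ hx)) _ _
        rw [this, hb'1, List.take_append_drop]
      · intro x hx
        rcases List.mem_cons.mp hx with rfl | hxL
        · rw [Function.update_self, List.length_take]; omega
        · rw [Function.update_of_ne (fun h : x = k => (List.nodup_cons.mp hnd).1 (h ▸ hxL))]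
          exact hb'2 x hxL

lemma flatMap_inj (f g : Fin r → List α) :
    ∀ (L : List (Fin r)), (∀ k ∈ L, (f k).length = (g k).length) →
      L.flatMap f = L.flatMap g → ∀ k ∈ L, f k = g k
  | [], _, _, k, hk => by simp at hk
  | k :: L, hlen, heq, x, hx => by
      rw [List.flatMap_cons, List.flatMap_cons] at heq
      obtain ⟨h1, h2⟩ := List.append_inj heq (hlen k ((List.mem_cons_self (a := k) (l := L))))
      rcases List.mem_cons.mp hx with rfl | hxL
      · exact h1
      · exact flatMap_inj f g L (fun y hy => hlen y (List.mem_cons_of_mem _ hy)) h2 x hxL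

end Main


/-- canonical nondecreasing word with `c i` copies of `i` -/
def canon {r : ℕ} (c : Fin r → ℕ) : List (Fin r) :=
  (List.finRange r).flatMap (fun i => List.replicate (c i) i)

lemma sorted_canon {r : ℕ} (c : Fin r → ℕ) : List.Pairwise (· ≤ ·) (canon c) := by
  unfold canon
  rw [List.flatMap, List.pairwise_flatten]
  constructor
  · intro l hl
    obtain ⟨i, _, rfl⟩ := List.mem_map.mp hl
    exact List.pairwise_replicate.mpr (Or.inr le_rfl)
  · rw [List.pairwise_map]
    refine (List.pairwise_lt_finRange r).imp ?_
    intro i j hij x hx y hy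
    rw [List.eq_of_mem_replicate hx, List.eq_of_mem_replicate hy]
    exact le_of_lt hij

lemma count_canon {r : ℕ} (c : Fin r → ℕ) (a : Fin r) : (canon c).count a = c a := by
  unfold canon
  rw [List.flatMap, List.count_flatten, List.map_map]
  have : ∀ i : Fin r, (List.count a ∘ fun i => List.replicate (c i) i) i
      = if i = a then c a else 0 := by
    intro i
    by_cases h : i = a <;> simp [List.count_replicate, h]
  rw [List.map_congr_left (fun i _ => this i), ← Fin.sum_univ_def]
  simp

lemma sort_eq_canon {r : ℕ} (w : List (Fin r)) :
    w.insertionSort (· ≤ ·) = canon (fun i => w.count i) := by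
  refine List.Perm.eq_of_pairwise' (List.pairwise_insertionSort _ w) (sorted_canon _) ?_
  refine (List.perm_insertionSort _ w).trans (List.perm_iff_count.mpr fun a => ?_)
  rw [count_canon]


lemma length_eq_sum_count {r : ℕ} (w : List (Fin r)) :
    w.length = ∑ k : Fin r, w.count k := by
  induction w with
  | nil => simp
  | cons x t ih =>
      simp only [List.count_cons, length_cons, ih, Finset.sum_add_distrib]
      have h1 : ∑ k : Fin r, (if (x == k) = true then 1 else 0) = 1 := by simp
      omega

lemma finite_of_length {r n : ℕ} (P : List (Fin r) → Prop)
    (h : ∀ l, P l → l.length = n) : Finite {l : List (Fin r) // P l} := by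
  refine Finite.of_injective (fun x => (fun k : Fin n => x.val[k.val]?)) ?_
  rintro ⟨l₁, h₁⟩ ⟨l₂, h₂⟩ heq
  ext1
  apply List.ext_getElem? fun m => ?_
  by_cases hm : m < n
  · exact congrFun heq ⟨m, hm⟩
  · rw [List.getElem?_eq_none, List.getElem?_eq_none]
    · rw [h l₂ h₂]; omega
    · rw [h l₁ h₁]; omega

lemma natCard_sigma {ι : Type*} [Fintype ι] (F : ι → Type*) [hF : ∀ i, Finite (F i)] :
    Nat.card (Σ i, F i) = ∑ i, Nat.card (F i) := by
  letI : ∀ i, Fintype (F i) := fun i => Fintype.ofFinite _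
  simp [Nat.card_eq_fintype_card, Fintype.card_sigma]

-- multinomial recurrence
lemma multinomial_rec {r : ℕ} (m : Fin r → ℕ) (N : ℕ) (hN : ∑ j, m j = N + 1) :
    ∑ j : Fin r, (if m j = 0 then 0 else
        Nat.multinomial Finset.univ (Function.update m j (m j - 1)))
      = Nat.multinomial Finset.univ m := by
  have hP : 0 < ∏ k : Fin r, (m k).factorial :=
    Finset.prod_pos fun k _ => Nat.factorial_pos _
  apply Nat.eq_of_mul_eq_mul_left hP
  rw [Nat.multinomial_spec, hN, Finset.mul_sum]
  have key : ∀ j : Fin r,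
      (∏ k : Fin r, (m k).factorial) *
        (if m j = 0 then 0 else
          Nat.multinomial Finset.univ (Function.update m j (m j - 1)))
      = m j * N.factorial := by
    intro j
    by_cases hj : m j = 0
    · simp [hj]
    · rw [if_neg hj]
      have hsum : ∑ k : Fin r, Function.update m j (m j - 1) k = N := by
        rw [Finset.sum_update_of_mem (Finset.mem_univ j)]
        have := Finset.add_sum_erase Finset.univ m (Finset.mem_univ j)
        have hle : m j ≤ N + 1 := hN ▸ Finset.single_le_sum
          (f := m) (fun k _ => Nat.zero_le _) (Finset.mem_univ j)
        rw [Finset.sdiff_singleton_eq_erase]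
        omega
      have hprod : (∏ k : Fin r, (m k).factorial)
          = m j * ∏ k : Fin r, (Function.update m j (m j - 1) k).factorial := by
        rw [Finset.prod_congr rfl (fun k _ =>
            Function.apply_update (fun _ n => n.factorial) m j (m j - 1) k),
          Finset.prod_update_of_mem (Finset.mem_univ j),
          ← Finset.mul_prod_erase Finset.univ (fun k => (m k).factorial)
            (Finset.mem_univ j), Finset.sdiff_singleton_eq_erase]
        rw [← mul_assoc]
        congr 1
        exact (Nat.mul_factorial_pred hj).symm
      rw [hprod, mul_assoc, Nat.multinomial_spec, hsum]
  calc ∑ j : Fin r, (∏ k : Fin r, (m k).factorial) * _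
      = ∑ j : Fin r, m j * N.factorial := Finset.sum_congr rfl fun j _ => key j
    _ = (∑ j, m j) * N.factorial := by rw [Finset.sum_mul]
    _ = (N + 1).factorial := by rw [hN, Nat.factorial_succ]

lemma card_lists {r : ℕ} : ∀ (N : ℕ) (m : Fin r → ℕ), (∑ j, m j = N) →
    Nat.card {l : List (Fin r) // ∀ j, l.count j = m j}
      = Nat.multinomial Finset.univ m
  | 0, m, hm => by
      have hz : ∀ j, m j = 0 := by
        intro j
        have := Finset.sum_eq_zero_iff.mp hm
        exact this j (Finset.mem_univ j)
      have h1 : Nat.card {l : List (Fin r) // ∀ j, l.count j = m j} = 1 := by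
        rw [Nat.card_eq_one_iff_unique]
        constructor
        · constructor
          rintro ⟨l₁, hl₁⟩ ⟨l₂, hl₂⟩
          have e1 : l₁ = [] := by
            rw [← List.length_eq_zero_iff, length_eq_sum_count]
            simp [hl₁, hz]
          have e2 : l₂ = [] := by
            rw [← List.length_eq_zero_iff, length_eq_sum_count]
            simp [hl₂, hz]
          simp [e1, e2]
        · exact ⟨⟨[], fun j => by simp [hz]⟩⟩
      have h2 : Nat.multinomial Finset.univ m = 1 := by
        have := Nat.multinomial_spec Finset.univ m
        simp only [hz] at this
        simpa using this
      rw [h1, h2]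
  | N + 1, m, hm => by
      classical
      set C : Fin r → Type _ := fun j =>
        {l : List (Fin r) // ∀ k, l.count k + (if j = k then 1 else 0) = m k} with hC
      have hlenC : ∀ j (l : List (Fin r)),
          (∀ k, l.count k + (if j = k then 1 else 0) = m k) → l.length = N := by
        intro j l hl
        have h1 : ∑ k : Fin r, (l.count k + (if j = k then 1 else 0)) = N + 1 := by
          rw [Finset.sum_congr rfl fun k _ => hl k]; exact hm
        rw [Finset.sum_add_distrib] at h1
        have h2 : ∑ k : Fin r, (if j = k then 1 else 0) = 1 := by simp
        rw [length_eq_sum_count]; omega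
      haveI : ∀ j, Finite (C j) := fun j => finite_of_length _ (hlenC j)
      -- bijection with sigma
      have hbij : Nat.card (Σ j, C j)
          = Nat.card {l : List (Fin r) // ∀ j, l.count j = m j} := by
        apply Nat.card_eq_of_bijective
          (f := fun x => ⟨x.1 :: x.2.val, fun k => by
            rw [List.count_cons]
            simpa using x.2.property k⟩)
        constructor
        · rintro ⟨j₁, t₁, h₁⟩ ⟨j₂, t₂, h₂⟩ heq
          simp only [Subtype.mk.injEq, List.cons.injEq] at heq
          obtain ⟨rfl, rfl⟩ := heq
          rfl
        · rintro ⟨l, hl⟩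
          match l, hl with
          | [], hl => 
            exfalso
            have : (0:ℕ) = N + 1 := by
              rw [← hm, Finset.sum_congr rfl fun k _ => (hl k).symm]; simp
            omega
          | x :: t, hl =>
            refine ⟨⟨x, t, fun k => ?_⟩, rfl⟩
            have := hl k
            rw [List.count_cons] at this
            simpa using this
      rw [← hbij, natCard_sigma]
      have hcard : ∀ j : Fin r, Nat.card (C j) =
          if m j = 0 then 0 else
            Nat.multinomial Finset.univ (Function.update m j (m j - 1)) := by
        intro j
        by_cases hj : m j = 0
        · rw [if_pos hj]
          haveI : IsEmpty (C j) := ⟨fun x => by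
            have := x.property j
            simp [hj] at this⟩
          exact Nat.card_of_isEmpty
        · rw [if_neg hj]
          have hEq : C j ≃ {l : List (Fin r) //
              ∀ k, l.count k = Function.update m j (m j - 1) k} := by
            apply Equiv.subtypeEquivRight
            intro l
            constructor
            · intro h k
              have := h k
              rw [Function.update_apply]
              by_cases hk : k = j
              · subst hk; simp at this ⊢; omega
              · have hjk : ¬ (j = k) := fun e => hk e.symm
                simp [hk, hjk] at this ⊢; omega
            · intro h k
              have := h k
              rw [Function.update_apply] at this
              by_cases hk : k = j
              · subst hk; simp at this ⊢; omega
              · have hjk : ¬ (j = k) := fun e => hk e.symm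
                simp [hk, hjk] at this ⊢; omega
          rw [Nat.card_congr hEq]
          apply card_lists N
          rw [Finset.sum_update_of_mem (Finset.mem_univ j)]
          have h3 := Finset.add_sum_erase Finset.univ m (Finset.mem_univ j)
          have hle : m j ≤ N + 1 := hm ▸ Finset.single_le_sum
            (f := m) (fun k _ => Nat.zero_le _) (Finset.mem_univ j)
          rw [Finset.sdiff_singleton_eq_erase]
          omega
      rw [Finset.sum_congr rfl fun j _ => hcard j]
      exact multinomial_rec m N hm

lemma sum_count_fst {r : ℕ} (l : List (Fin r × Fin r)) (i : Fin r) :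
    ∑ j : Fin r, l.count (i, j) = (l.map Prod.fst).count i := by
  induction l with
  | nil => simp
  | cons p t ih =>
      rw [Finset.sum_congr rfl fun j _ => List.count_cons (a := (i, j)) (b := p) (l := t),
        Finset.sum_add_distrib, ih, List.map_cons, List.count_cons]
      congr 1
      rcases p with ⟨a, b⟩
      by_cases ha : a = i
      · subst ha
        simp [Prod.ext_iff]
      · simp [Prod.ext_iff, ha]

lemma sum_count_snd {r : ℕ} (l : List (Fin r × Fin r)) (i : Fin r) :
    ∑ j : Fin r, l.count (j, i) = (l.map Prod.snd).count i := by
  induction l with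
  | nil => simp
  | cons p t ih =>
      rw [Finset.sum_congr rfl fun j _ => List.count_cons (a := (j, i)) (b := p) (l := t),
        Finset.sum_add_distrib, ih, List.map_cons, List.count_cons]
      congr 1
      rcases p with ⟨a, b⟩
      by_cases hb : b = i
      · subst hb
        simp [Prod.ext_iff]
      · simp [Prod.ext_iff, hb]

lemma fw_isFlow {r : ℕ} (w : List (Fin r)) : IsFlowKr (fw w) := by
  intro i
  unfold fw
  have hlen : (w.insertionSort (· ≤ ·)).length = w.length :=
    (List.perm_insertionSort _ w).length_eq
  rw [sum_count_fst, sum_count_snd,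
    List.map_fst_zip (le_of_eq hlen), List.map_snd_zip (ge_of_eq hlen)]
  exact (List.perm_insertionSort _ w).count_eq i


lemma key_join {r : ℕ} (γ : Fin r × Fin r → ℕ) (hγ : IsFlowKr γ)
    (b : ∀ i : Fin r, {l : List (Fin r) // ∀ j, l.count j = γ (i, j)}) :
    fw ((List.finRange r).flatMap fun i => (b i).val) = γ := by
  set W := (List.finRange r).flatMap fun i => (b i).val with hW
  have hblen : ∀ k, ((b k).val).length = ∑ j, γ (k, j) := fun k => by
    rw [length_eq_sum_count]
    exact Finset.sum_congr rfl fun j _ => (b k).property j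
  have hcW : ∀ k, W.count k = ((b k).val).length := by
    intro k
    have h1 : W.count k = ∑ i : Fin r, ((b i).val).count k := by
      rw [hW, List.flatMap, List.count_flatten, List.map_map, ← Fin.sum_univ_def]
      rfl
    rw [h1, Finset.sum_congr rfl fun i _ => (b i).property k, ← hγ k, hblen k]
  funext e
  rcases e with ⟨i, j⟩
  show (((W.insertionSort (· ≤ ·)).zip W).count (i, j)) = γ (i, j)
  rw [sort_eq_canon]
  have := count_zip_flatMap (fun k => W.count k) (fun k => (b k).val) j
    (List.finRange r) (List.nodup_finRange r)
    (fun k _ => ((hcW k).symm)) i (List.mem_finRange i)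
  rw [← hW] at this
  rw [show canon (fun k => W.count k)
      = (List.finRange r).flatMap (fun k => List.replicate (W.count k) k) from rfl,
    this]
  exact (b i).property j


/-- The map `w ↦ f_w` sends every word to a flow on `K_r`, is a surjection onto the set
of flows, and the fiber over a flow `γ` has exactly
`mult(γ) = ∏_i multinomial((γ(i,j))_j)` elements. -/
theorem word_to_flow_surjective_with_multiplicity (r : ℕ) :
    (∀ w : List (Fin r), IsFlowKr (fw w)) ∧
    (∀ γ : Fin r × Fin r → ℕ, IsFlowKr γ →
      Nat.card {w : List (Fin r) // fw w = γ} =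
        ∏ i : Fin r, Nat.multinomial Finset.univ (fun j : Fin r => γ (i, j))) := by
  refine ⟨fw_isFlow, ?_⟩
  intro γ hγ
  have hbij : Function.Bijective
      (fun b : (∀ i : Fin r, {l : List (Fin r) // ∀ j, l.count j = γ (i, j)}) =>
        (⟨(List.finRange r).flatMap fun i => (b i).val, key_join γ hγ b⟩ :
          {w : List (Fin r) // fw w = γ})) := by
    constructor
    · intro b b' h
      have h2 : ((List.finRange r).flatMap fun i => (b i).val)
          = (List.finRange r).flatMap fun i => (b' i).val :=
        congrArg Subtype.val h
      funext i
      ext1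
      refine flatMap_inj _ _ (List.finRange r) (fun k _ => ?_) h2 i (List.mem_finRange i)
      rw [length_eq_sum_count, length_eq_sum_count]
      exact Finset.sum_congr rfl fun j _ => by
        rw [(b k).property j, (b' k).property j]
    · rintro ⟨w, hw⟩
      have hlenw : w.length = ((List.finRange r).map (fun k => w.count k)).sum := by
        rw [length_eq_sum_count, Fin.sum_univ_def]
      obtain ⟨b, hb1, hb2⟩ := exists_blocks (fun k => w.count k) (List.finRange r)
        (List.nodup_finRange r) w hlenw
      have hbcount : ∀ i j, (b i).count j = γ (i, j) := by
        intro i j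
        have h := count_zip_flatMap (fun k => w.count k) b j (List.finRange r)
          (List.nodup_finRange r) (fun k _ => hb2 k (List.mem_finRange k))
          i (List.mem_finRange i)
        rw [hb1] at h
        rw [← h, ← congrFun hw (i, j)]
        show _ = ((w.insertionSort (· ≤ ·)).zip w).count (i, j)
        rw [sort_eq_canon]
        rfl
      exact ⟨fun i => ⟨b i, fun j => hbcount i j⟩, Subtype.ext hb1⟩
  rw [← Nat.card_eq_of_bijective _ hbij, Nat.card_pi]
  exact Finset.prod_congr rfl fun i _ =>
    card_lists (∑ j, γ (i, j)) (fun j => γ (i, j)) rfl
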